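/- Let (x*,u*) be an admissible process for the linear-convex problem without state constraints: minimize l(x(a),x(b)) + ∫_a^b L(t,x(t),u(t)) dt subject to ẋ(t) = A(t)x(t) + B(t)u(t) a.e., u(t) ∈ U(t) a.e., and (x(a),x(b)) ∈ E. Suppose there exists an absolutely continuous p : [a,b] → ℝⁿ such that: (i) for almost every t ∈ [a,b], for all x ∈ ℝⁿ and all u ∈ U(t), ⟨p(t), A(t)x + B(t)u⟩ − L(t,x,u) ≤ ⟨p(t), A(t)x*(t) + B(t)u*(t)⟩ − L(t,x*(t),u*(t)) + ⟨−ṗ(t), x − x*(t)⟩; (ii) for all (x_a,x_b) ∈ E, l(x_a,x_b) − l(x*(a),x*(b)) ≥ ⟨p(a), x_a − x*(a)⟩ − ⟨p(b), x_b − x*(b)⟩. Then (x*,u*) minimizes the cost over all admissible processes. -/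

import Mathlib

open MeasureTheory Set Filter
open scoped InnerProductSpace

noncomputable section

/-- Shorthand for Euclidean space `ℝⁿ`. -/
abbrev Vec (n : ℕ) := EuclideanSpace ℝ (Fin n)

/-- An admissible process for the linear(-convex) optimal control problem without state
constraints on `[a,b]`: `x` is absolutely continuous (encoded via an integrable derivative
`x'` and the integral representation), `ẋ(t) = A(t)x(t) + B(t)u(t)` a.e., `u` is measurable
with `u(t) ∈ U(t)` a.e., the endpoints satisfy `(x(a), x(b)) ∈ E`, and the running cost
`t ↦ L(t,x(t),u(t))` is integrable. -/
def AdmissibleS {n k : ℕ} (a b : ℝ)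
    (A : ℝ → Vec n →L[ℝ] Vec n) (B : ℝ → Vec k →L[ℝ] Vec n)
    (U : ℝ → Set (Vec k)) (E : Set (Vec n × Vec n))
    (L : ℝ → Vec n → Vec k → ℝ)
    (x : ℝ → Vec n) (u : ℝ → Vec k) : Prop :=
  AEStronglyMeasurable u (volume.restrict (Icc a b)) ∧
  (∀ᵐ t ∂(volume.restrict (Icc a b)), u t ∈ U t) ∧
  (∃ x' : ℝ → Vec n, IntegrableOn x' (Icc a b) ∧
    (∀ t ∈ Icc a b, x t = x a + ∫ s in a..t, x' s) ∧
    (∀ᵐ t ∂(volume.restrict (Icc a b)), x' t = A t (x t) + B t (u t))) ∧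
  (x a, x b) ∈ E ∧
  IntegrableOn (fun t => L t (x t) (u t)) (Icc a b)

/-- The cost of a process. -/
def costS {n k : ℕ} (a b : ℝ) (l : Vec n → Vec n → ℝ) (L : ℝ → Vec n → Vec k → ℝ)
    (x : ℝ → Vec n) (u : ℝ → Vec k) : ℝ :=
  l (x a) (x b) + ∫ t in a..b, L t (x t) (u t)

lemma triangle_aux {n : ℕ} {a b : ℝ} {F G : ℝ → Vec n}
    (hF : IntegrableOn F (Ioc a b)) (hG : IntegrableOn G (Ioc a b)) :
    ((∫ t in Ioc a b, ⟪G t, ∫ s in Ioc a t, F s⟫_ℝ)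
      + ∫ t in Ioc a b, ⟪F t, ∫ s in Ioc a t, G s⟫_ℝ)
      = ⟪∫ t in Ioc a b, F t, ∫ t in Ioc a b, G t⟫_ℝ := by
  set μ := volume.restrict (Ioc a b) with hμ
  have prodInner : ∀ (F' G' : ℝ → Vec n), Integrable F' μ → Integrable G' μ →
      Integrable (fun z : ℝ × ℝ => ⟪F' z.1, G' z.2⟫_ℝ) (μ.prod μ) := by
    intro F' G' hF' hG'
    refine Integrable.mono' (hF'.norm.mul_prod hG'.norm) ((hF'.1.comp_fst (ν := μ)).inner (hG'.1.comp_snd (μ := μ))) ?_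
    exact Eventually.of_forall fun z => norm_inner_le_norm _ _
  have hS1 : MeasurableSet {z : ℝ × ℝ | z.2 ≤ z.1} :=
    measurableSet_le measurable_snd measurable_fst
  have hS1' : MeasurableSet {z : ℝ × ℝ | z.1 ≤ z.2} :=
    measurableSet_le measurable_fst measurable_snd
  have hS2 : MeasurableSet {z : ℝ × ℝ | z.2 < z.1} :=
    measurableSet_lt measurable_snd measurable_fst
  set H1 : ℝ × ℝ → ℝ := ({z : ℝ × ℝ | z.2 ≤ z.1}.indicator fun z => ⟪G z.1, F z.2⟫_ℝ) with hH1def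
  set H2 : ℝ × ℝ → ℝ := ({z : ℝ × ℝ | z.2 < z.1}.indicator fun z => ⟪F z.1, G z.2⟫_ℝ) with hH2def
  have hH1 : Integrable H1 (μ.prod μ) := (prodInner G F hG hF).indicator hS1
  have hH2 : Integrable H2 (μ.prod μ) := (prodInner F G hF hG).indicator hS2
  -- T1
  have hT1 : (∫ t in Ioc a b, ⟪G t, ∫ s in Ioc a t, F s⟫_ℝ) = ∫ z, H1 z ∂(μ.prod μ) := by
    have e1 : (∫ z, H1 z ∂(μ.prod μ)) = ∫ t, (∫ s, H1 (t, s) ∂μ) ∂μ :=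
      (MeasureTheory.integral_integral (f := fun t s => H1 (t, s)) hH1).symm
    rw [e1]
    refine setIntegral_congr_fun measurableSet_Ioc fun t ht => ?_
    have hset : Iic t ∩ Ioc a b = Ioc a t := by
      ext s
      simp only [mem_inter_iff, mem_Iic, mem_Ioc]
      exact ⟨fun h => ⟨h.2.1, h.1⟩, fun h => ⟨h.2, h.1, h.2.trans ht.2⟩⟩
    have h1 : ∫ s in Ioc a t, F s = ∫ s, (Iic t).indicator F s ∂μ := by
      rw [integral_indicator measurableSet_Iic, hμ,
        Measure.restrict_restrict measurableSet_Iic, hset]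
    rw [h1, ← integral_inner (hF.indicator measurableSet_Iic) (G t)]
    refine integral_congr_ae (Eventually.of_forall fun s => ?_)
    by_cases hst : s ≤ t
    · simp [hH1def, Set.indicator_of_mem, hst, Set.mem_Iic]
    · simp [hH1def, Set.indicator_of_notMem, hst, Set.mem_Iic]
  -- T2
  have hT2 : (∫ t in Ioc a b, ⟪F t, ∫ s in Ioc a t, G s⟫_ℝ) = ∫ z, H2 z ∂(μ.prod μ) := by
    have e1 : (∫ z, H2 z ∂(μ.prod μ)) = ∫ t, (∫ s, H2 (t, s) ∂μ) ∂μ :=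
      (MeasureTheory.integral_integral (f := fun t s => H2 (t, s)) hH2).symm
    rw [e1]
    refine setIntegral_congr_fun measurableSet_Ioc fun t ht => ?_
    have hset : Iio t ∩ Ioc a b = Ioo a t := by
      ext s
      simp only [mem_inter_iff, mem_Iio, mem_Ioc, mem_Ioo]
      exact ⟨fun h => ⟨h.2.1, h.1⟩, fun h => ⟨h.2, h.1, (le_of_lt h.2).trans ht.2⟩⟩
    have h1 : ∫ s in Ioc a t, G s = ∫ s, (Iio t).indicator G s ∂μ := by
      rw [integral_indicator measurableSet_Iio, hμ,
        Measure.restrict_restrict measurableSet_Iio, hset]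
      exact MeasureTheory.integral_Ioc_eq_integral_Ioo
    rw [h1, ← integral_inner (hG.indicator measurableSet_Iio) (F t)]
    refine integral_congr_ae (Eventually.of_forall fun s => ?_)
    by_cases hst : s < t
    · simp [hH2def, Set.indicator_of_mem, hst, Set.mem_Iio]
    · simp [hH2def, Set.indicator_of_notMem, hst, Set.mem_Iio]
  -- swap H1
  have hswapfun : (fun z : ℝ × ℝ => H1 z.swap)
      = ({z : ℝ × ℝ | z.1 ≤ z.2}.indicator fun z => ⟪F z.1, G z.2⟫_ℝ) := by
    funext z
    by_cases hz : z.1 ≤ z.2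
    · simp only [hH1def, Prod.swap, Set.indicator_of_mem, hz, Set.mem_setOf_eq]
      exact real_inner_comm _ _
    · simp [hH1def, Prod.swap, Set.indicator_of_notMem, hz, Set.mem_setOf_eq]
  have hH1s : Integrable (fun z : ℝ × ℝ => H1 z.swap) (μ.prod μ) := by
    rw [hswapfun]; exact (prodInner F G hF hG).indicator hS1'
  have hswap : ∫ z, H1 z ∂(μ.prod μ) = ∫ z, H1 z.swap ∂(μ.prod μ) :=
    (integral_prod_swap H1).symm
  rw [hT1, hT2, hswap, ← integral_add hH1s hH2]
  have hsum : (fun z : ℝ × ℝ => H1 z.swap + H2 z) = fun z : ℝ × ℝ => ⟪F z.1, G z.2⟫_ℝ := by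
    funext z
    rw [congrFun hswapfun z]
    by_cases hz : z.1 ≤ z.2
    · have hz2 : ¬ z.2 < z.1 := not_lt.2 hz
      simp [hH2def, Set.indicator_of_mem, Set.indicator_of_notMem, hz, hz2, Set.mem_setOf_eq]
    · have hz2 : z.2 < z.1 := not_le.1 hz
      simp [hH2def, Set.indicator_of_mem, Set.indicator_of_notMem, hz, hz2, Set.mem_setOf_eq]
  rw [hsum]
  have e2 : (∫ z : ℝ × ℝ, ⟪F z.1, G z.2⟫_ℝ ∂(μ.prod μ))
      = ∫ t, (∫ s, ⟪F t, G s⟫_ℝ ∂μ) ∂μ :=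
    (MeasureTheory.integral_integral (f := fun t s => ⟪F t, G s⟫_ℝ) (prodInner F G hF hG)).symm
  rw [e2]
  have e3 : ∀ t, (∫ s, ⟪F t, G s⟫_ℝ ∂μ) = ⟪F t, ∫ s, G s ∂μ⟫_ℝ := fun t => integral_inner hG (F t)
  simp_rw [e3]
  have e4 : ∀ t, ⟪F t, ∫ s, G s ∂μ⟫_ℝ = ⟪∫ s, G s ∂μ, F t⟫_ℝ := fun t => real_inner_comm _ _
  rw [show (fun t => ⟪F t, ∫ s, G s ∂μ⟫_ℝ) = fun t => ⟪∫ s, G s ∂μ, F t⟫_ℝ from funext e4,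
    integral_inner hF]
  exact real_inner_comm _ _

lemma contOn_of_AC {n : ℕ} {a b : ℝ} {f f' : ℝ → Vec n}
    (hf' : IntegrableOn f' (Icc a b))
    (hf : ∀ t ∈ Icc a b, f t = f a + ∫ s in a..t, f' s) :
    ContinuousOn f (Icc a b) := by
  have h1 : ContinuousOn (fun t => f a + ∫ s in Ioc a t, f' s) (Icc a b) :=
    continuousOn_const.add (intervalIntegral.continuousOn_primitive hf')
  exact h1.congr fun t ht => by rw [hf t ht, intervalIntegral.integral_of_le ht.1]

lemma parts_aux {n : ℕ} {a b : ℝ} (hab : a ≤ b) {f g f' g' : ℝ → Vec n}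
    (hf' : IntegrableOn f' (Icc a b)) (hg' : IntegrableOn g' (Icc a b))
    (hf : ∀ t ∈ Icc a b, f t = f a + ∫ s in a..t, f' s)
    (hg : ∀ t ∈ Icc a b, g t = g a + ∫ s in a..t, g' s) :
    ∫ t in Ioc a b, (⟪f' t, g t⟫_ℝ + ⟪f t, g' t⟫_ℝ)
      = ⟪f b, g b⟫_ℝ - ⟪f a, g a⟫_ℝ := by
  set μ := volume.restrict (Ioc a b) with hμ
  have hfI : Integrable f' μ := hf'.mono_set Ioc_subset_Icc_self
  have hgI : Integrable g' μ := hg'.mono_set Ioc_subset_Icc_self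
  -- rewrite f, g on Ioc
  have hfIoc : ∀ t ∈ Ioc a b, f t = f a + ∫ s in Ioc a t, f' s := fun t ht => by
    rw [hf t ⟨ht.1.le, ht.2⟩, intervalIntegral.integral_of_le ht.1.le]
  have hgIoc : ∀ t ∈ Ioc a b, g t = g a + ∫ s in Ioc a t, g' s := fun t ht => by
    rw [hg t ⟨ht.1.le, ht.2⟩, intervalIntegral.integral_of_le ht.1.le]
  -- total integrals
  have hfb : (∫ s in Ioc a b, f' s) = f b - f a := by
    rw [hf b ⟨hab, le_refl b⟩, intervalIntegral.integral_of_le hab]; abel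
  have hgb : (∫ s in Ioc a b, g' s) = g b - g a := by
    rw [hg b ⟨hab, le_refl b⟩, intervalIntegral.integral_of_le hab]; abel
  -- integrability of primitive-inner terms
  have primInt : ∀ (F G : ℝ → Vec n), IntegrableOn F (Icc a b) → IntegrableOn G (Icc a b) →
      Integrable (fun t => ⟪F t, ∫ s in Ioc a t, G s⟫_ℝ) μ := by
    intro F G hF hG
    have hGI : Integrable G μ := hG.mono_set Ioc_subset_Icc_self
    set C := ∫ s in Ioc a b, ‖G s‖ with hC
    have hprim : AEStronglyMeasurable (fun t => ∫ s in Ioc a t, G s) μ := by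
      have := (intervalIntegral.continuousOn_primitive (f := G) (a := a) (b := b) hG).aestronglyMeasurable (μ := volume)
        measurableSet_Icc
      exact this.mono_measure (Measure.restrict_mono Ioc_subset_Icc_self le_rfl)
    have hFI : Integrable F μ := hF.mono_set Ioc_subset_Icc_self
    refine Integrable.mono' (hFI.norm.mul_const C) (hFI.1.inner hprim) ?_
    rw [hμ, ae_restrict_iff' measurableSet_Ioc]
    refine Eventually.of_forall fun t ht => ?_
    refine (norm_inner_le_norm _ _).trans ?_
    refine mul_le_mul_of_nonneg_left ?_ (norm_nonneg _)
    refine (norm_integral_le_integral_norm _).trans ?_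
    refine setIntegral_mono_set hGI.norm (Eventually.of_forall fun s => norm_nonneg _) ?_
    exact HasSubset.Subset.eventuallyLE (Ioc_subset_Ioc le_rfl ht.2)
  -- split the integral
  have i1 : Integrable (fun t => ⟪f' t, g a⟫_ℝ) μ := hfI.inner_const _
  have i2 : Integrable (fun t => ⟪f' t, ∫ s in Ioc a t, g' s⟫_ℝ) μ := primInt f' g' hf' hg'
  have i3 : Integrable (fun t => ⟪f a, g' t⟫_ℝ) μ := hgI.const_inner _
  have i4 : Integrable (fun t => ⟪∫ s in Ioc a t, f' s, g' t⟫_ℝ) μ := by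
    have := primInt g' f' hg' hf'
    have e : (fun t => ⟪∫ s in Ioc a t, f' s, g' t⟫_ℝ)
        = fun t => ⟪g' t, ∫ s in Ioc a t, f' s⟫_ℝ := funext fun t => real_inner_comm _ _
    rw [e]; exact this
  have step : ∫ t in Ioc a b, (⟪f' t, g t⟫_ℝ + ⟪f t, g' t⟫_ℝ)
      = ∫ t in Ioc a b, ((⟪f' t, g a⟫_ℝ + ⟪f' t, ∫ s in Ioc a t, g' s⟫_ℝ)
          + (⟪f a, g' t⟫_ℝ + ⟪∫ s in Ioc a t, f' s, g' t⟫_ℝ)) := by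
    refine setIntegral_congr_fun measurableSet_Ioc fun t ht => ?_
    rw [hfIoc t ht, hgIoc t ht]
    simp only [inner_add_left, inner_add_right]
    try ring
  have i12 : Integrable (fun t => ⟪f' t, g a⟫_ℝ + ⟪f' t, ∫ s in Ioc a t, g' s⟫_ℝ) μ := i1.add i2
  have i34 : Integrable (fun t => ⟪f a, g' t⟫_ℝ + ⟪∫ s in Ioc a t, f' s, g' t⟫_ℝ) μ := i3.add i4
  rw [step, integral_add i12 i34, integral_add i1 i2, integral_add i3 i4]
  have e1 : (∫ t in Ioc a b, ⟪f' t, g a⟫_ℝ) = ⟪f b - f a, g a⟫_ℝ := by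
    have : (∫ t in Ioc a b, ⟪f' t, g a⟫_ℝ) = ∫ t in Ioc a b, ⟪g a, f' t⟫_ℝ :=
      integral_congr_ae (Eventually.of_forall fun t => real_inner_comm _ _)
    rw [this, integral_inner hfI, hfb, real_inner_comm]
  have e3 : (∫ t in Ioc a b, ⟪f a, g' t⟫_ℝ) = ⟪f a, g b - g a⟫_ℝ := by
    rw [integral_inner hgI, hgb]
  have e4 : (∫ t in Ioc a b, ⟪∫ s in Ioc a t, f' s, g' t⟫_ℝ)
      = ∫ t in Ioc a b, ⟪g' t, ∫ s in Ioc a t, f' s⟫_ℝ :=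
    integral_congr_ae (Eventually.of_forall fun t => real_inner_comm _ _)
  have h24 := triangle_aux (F := f') (G := g')
    (hf'.mono_set Ioc_subset_Icc_self) (hg'.mono_set Ioc_subset_Icc_self)
  rw [hfb, hgb] at h24
  rw [e1, e3, e4]
  simp only [inner_sub_left, inner_sub_right] at h24 ⊢
  linarith

/-- for the linear-convex problem without state constraints, the existence of
an absolutely continuous `p` satisfying the normal (λ₀ = 1) extremality conditions
(i) (joint maximization/subgradient inequality) and (ii) (transversality subgradient
inequality) is sufficient for `(x*,u*)` to be a global minimizer among admissible
processes. -/
theorem sufficiency_linear_convex_no_state_constraint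
    {n k : ℕ} (a b : ℝ) (hab : a < b)
    (A : ℝ → Vec n →L[ℝ] Vec n) (B : ℝ → Vec k →L[ℝ] Vec n)
    (U : ℝ → Set (Vec k)) (E : Set (Vec n × Vec n))
    (l : Vec n → Vec n → ℝ) (L : ℝ → Vec n → Vec k → ℝ)
    (hA : IntegrableOn A (Icc a b))
    (hB : AEStronglyMeasurable B (volume.restrict (Icc a b)))
    (hBbdd : ∃ M : ℝ, ∀ᵐ t ∂(volume.restrict (Icc a b)), ‖B t‖ ≤ M)
    (hEclosed : IsClosed E) (hEconv : Convex ℝ E)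
    (hUconv : ∀ t, Convex ℝ (U t))
    (hlconv : ConvexOn ℝ univ (fun q : Vec n × Vec n => l q.1 q.2))
    (hLconv : ∀ t, ConvexOn ℝ univ (fun q : Vec n × Vec k => L t q.1 q.2))
    (xs : ℝ → Vec n) (us : ℝ → Vec k)
    (hadm : AdmissibleS a b A B U E L xs us)
    (p p' : ℝ → Vec n)
    (hp'int : IntegrableOn p' (Icc a b))
    (hpAC : ∀ t ∈ Icc a b, p t = p a + ∫ s in a..t, p' s)
    (hi : ∀ᵐ t ∂(volume.restrict (Icc a b)), ∀ x : Vec n, ∀ u ∈ U t,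
      ⟪p t, A t x + B t u⟫_ℝ - L t x u ≤
        ⟪p t, A t (xs t) + B t (us t)⟫_ℝ - L t (xs t) (us t) + ⟪-p' t, x - xs t⟫_ℝ)
    (hii : ∀ xa xb, (xa, xb) ∈ E →
      l xa xb - l (xs a) (xs b) ≥ ⟪p a, xa - xs a⟫_ℝ - ⟪p b, xb - xs b⟫_ℝ) :
    ∀ x u, AdmissibleS a b A B U E L x u →
      costS a b l L xs us ≤ costS a b l L x u := by
  intro x u hadm2
  unfold AdmissibleS at hadm hadm2
  unfold costS
  obtain ⟨hu_m, huU, ⟨x', hx'int, hxAC, hx'eq⟩, hxE, hLx⟩ := hadm2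
  obtain ⟨hus_m, husU, ⟨xs', hxs'int, hxsAC, hxs'eq⟩, hxsE, hLxs⟩ := hadm
  set μ := volume.restrict (Ioc a b) with hμ
  have hsub : Ioc a b ⊆ Icc a b := Ioc_subset_Icc_self
  have hle : μ ≤ volume.restrict (Icc a b) := Measure.restrict_mono hsub le_rfl
  have hi' := ae_restrict_of_ae_restrict_of_subset hsub hi
  have huU' := ae_restrict_of_ae_restrict_of_subset hsub huU
  have hx'eq' := ae_restrict_of_ae_restrict_of_subset hsub hx'eq
  have hxs'eq' := ae_restrict_of_ae_restrict_of_subset hsub hxs'eq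
  have hq'int : IntegrableOn (fun t => x' t - xs' t) (Icc a b) := hx'int.sub hxs'int
  have hqAC : ∀ t ∈ Icc a b, x t - xs t = (x a - xs a) + ∫ s in a..t, (x' s - xs' s) := by
    intro t ht
    have h1 : IntervalIntegrable x' volume a t := by
      apply IntegrableOn.intervalIntegrable
      rw [uIcc_of_le ht.1]
      exact hx'int.mono_set (Icc_subset_Icc le_rfl ht.2)
    have h2 : IntervalIntegrable xs' volume a t := by
      apply IntegrableOn.intervalIntegrable
      rw [uIcc_of_le ht.1]
      exact hxs'int.mono_set (Icc_subset_Icc le_rfl ht.2)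
    rw [hxAC t ht, hxsAC t ht, intervalIntegral.integral_sub h1 h2]
    abel
  have hparts : ∫ t in Ioc a b, (⟪p' t, x t - xs t⟫_ℝ + ⟪p t, x' t - xs' t⟫_ℝ)
      = ⟪p b, x b - xs b⟫_ℝ - ⟪p a, x a - xs a⟫_ℝ :=
    parts_aux (f := p) (g := fun t => x t - xs t) (f' := p') (g' := fun t => x' t - xs' t)
      hab.le hp'int hq'int hpAC hqAC
  -- key pointwise inequality
  have hkey : ∀ᵐ t ∂μ, ⟪p' t, x t - xs t⟫_ℝ + ⟪p t, x' t - xs' t⟫_ℝ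
      ≤ L t (x t) (u t) - L t (xs t) (us t) := by
    filter_upwards [hi', huU', hx'eq', hxs'eq'] with t hit hut hxt hxst
    have h := hit (x t) (u t) hut
    rw [← hxt, ← hxst, inner_neg_left, inner_sub_right] at h
    have e : ⟪p t, x' t - xs' t⟫_ℝ = ⟪p t, x' t⟫_ℝ - ⟪p t, xs' t⟫_ℝ := inner_sub_right _ _ _
    have e2 : ⟪p' t, x t - xs t⟫_ℝ = ⟪p' t, x t⟫_ℝ - ⟪p' t, xs t⟫_ℝ := inner_sub_right _ _ _
    rw [e, e2]
    linarith
  -- integrability of the left-hand side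
  have hpC : ContinuousOn p (Icc a b) := contOn_of_AC hp'int hpAC
  have hxC : ContinuousOn x (Icc a b) := contOn_of_AC hx'int hxAC
  have hxsC : ContinuousOn xs (Icc a b) := contOn_of_AC hxs'int hxsAC
  have hqC : ContinuousOn (fun t => x t - xs t) (Icc a b) := hxC.sub hxsC
  obtain ⟨Cp, hCp⟩ := isCompact_Icc.exists_bound_of_continuousOn hpC
  obtain ⟨Cq, hCq⟩ := isCompact_Icc.exists_bound_of_continuousOn hqC
  have hpM : AEStronglyMeasurable p μ :=
    (hpC.aestronglyMeasurable (μ := volume) measurableSet_Icc).mono_measure hle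
  have hqM : AEStronglyMeasurable (fun t => x t - xs t) μ :=
    (hqC.aestronglyMeasurable (μ := volume) measurableSet_Icc).mono_measure hle
  have hT1 : Integrable (fun t => ⟪p' t, x t - xs t⟫_ℝ) μ := by
    refine Integrable.mono' ((hp'int.mono_set hsub).norm.mul_const Cq)
      ((hp'int.mono_set hsub).1.inner hqM) ?_
    rw [hμ, ae_restrict_iff' measurableSet_Ioc]
    refine Eventually.of_forall fun t ht => ?_
    exact (norm_inner_le_norm _ _).trans
      (mul_le_mul_of_nonneg_left (hCq t (hsub ht)) (norm_nonneg _))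
  have hT2 : Integrable (fun t => ⟪p t, x' t - xs' t⟫_ℝ) μ := by
    refine Integrable.mono' ((hq'int.mono_set hsub).norm.const_mul Cp)
      (hpM.inner (hq'int.mono_set hsub).1) ?_
    rw [hμ, ae_restrict_iff' measurableSet_Ioc]
    refine Eventually.of_forall fun t ht => ?_
    exact (norm_inner_le_norm _ _).trans
      (mul_le_mul_of_nonneg_right (hCp t (hsub ht)) (norm_nonneg _))
  have hLHSint : Integrable (fun t => ⟪p' t, x t - xs t⟫_ℝ + ⟪p t, x' t - xs' t⟫_ℝ) μ :=
    hT1.add hT2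
  have hRHSint : Integrable (fun t => L t (x t) (u t) - L t (xs t) (us t)) μ :=
    (hLx.mono_set hsub).sub (hLxs.mono_set hsub)
  have hint := integral_mono_ae hLHSint hRHSint hkey
  rw [hparts] at hint
  have hsubint : (∫ t in Ioc a b, (L t (x t) (u t) - L t (xs t) (us t)))
      = (∫ t in Ioc a b, L t (x t) (u t)) - ∫ t in Ioc a b, L t (xs t) (us t) :=
    integral_sub (hLx.mono_set hsub) (hLxs.mono_set hsub)
  rw [hsubint] at hint
  have hend := hii (x a) (x b) hxE
  rw [intervalIntegral.integral_of_le hab.le, intervalIntegral.integral_of_le hab.le]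
  linarith
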